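/- (Self-consistency of BH membership via the leave-one-out set.) Fix $q\in(0,1)$ and p-values $p_1,\dots,p_m\in[0,1]$. For index $j$, let $\hat{\mathcal{R}}_{j\to0}$ be the BH($q$) rejection set applied to $(p_1,\dots,p_{j-1},0,p_{j+1},\dots,p_m)$ (so $j\in\hat{\mathcal{R}}_{j\to0}$ always), and let $\hat{\mathcal{R}}_j$ be the BH($q$) rejection set applied to $(p_1,\dots,p_m)$. Then $j \in \hat{\mathcal{R}}_j$ if and only if $p_j \le q|\hat{\mathcal{R}}_{j\to0}|/m$. -/

import Mathlib

open Finset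

/-- The largest `k` with `#{j : p_j ≤ qk/m} ≥ k` (the Benjamini–Hochberg step-up count). -/
noncomputable def BHkstar (q : ℝ) {m : ℕ} (p : Fin m → ℝ) : ℕ :=
  Nat.findGreatest (fun k => k ≤ (univ.filter (fun j => p j ≤ q * k / m)).card) m

/-- The Benjamini–Hochberg rejection set at level `q`: `{j : p_j ≤ q k*/m}`. -/
noncomputable def BHset (q : ℝ) {m : ℕ} (p : Fin m → ℝ) : Finset (Fin m) :=
  univ.filter (fun j => p j ≤ q * (BHkstar q p) / m)

lemma thresh_mono (q : ℝ) (hq : 0 ≤ q) (m : ℕ) {k k' : ℕ} (h : k ≤ k') :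
    q * k / m ≤ q * k' / m := by
  rw [div_eq_mul_inv, div_eq_mul_inv]
  have : q * (k : ℝ) ≤ q * k' := by
    apply mul_le_mul_of_nonneg_left _ hq
    exact_mod_cast h
  exact mul_le_mul_of_nonneg_right this (by positivity)

lemma count_mono (q : ℝ) (hq : 0 ≤ q) {m : ℕ} (p : Fin m → ℝ) {k k' : ℕ} (h : k ≤ k') :
    (univ.filter (fun j => p j ≤ q * k / m)).card ≤
      (univ.filter (fun j => p j ≤ q * k' / m)).card := by
  apply card_le_card
  intro i hi
  simp only [mem_filter, mem_univ, true_and] at *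
  exact hi.trans (thresh_mono q hq m h)

lemma kstar_le_count (q : ℝ) {m : ℕ} (p : Fin m → ℝ) :
    BHkstar q p ≤ (univ.filter (fun j => p j ≤ q * (BHkstar q p) / m)).card :=
  Nat.findGreatest_spec (P := fun k => k ≤ (univ.filter (fun j => p j ≤ q * k / m)).card)
    (Nat.zero_le m) (Nat.zero_le _)

lemma kstar_le (q : ℝ) {m : ℕ} (p : Fin m → ℝ) : BHkstar q p ≤ m :=
  Nat.findGreatest_le m

lemma count_eq_kstar (q : ℝ) (hq : 0 ≤ q) {m : ℕ} (p : Fin m → ℝ) :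
    (univ.filter (fun j => p j ≤ q * (BHkstar q p) / m)).card = BHkstar q p := by
  have h1 := kstar_le_count q p
  refine le_antisymm ?_ h1
  by_contra hlt
  push_neg at hlt
  have hkm : BHkstar q p ≤ m := kstar_le q p
  rcases eq_or_lt_of_le hkm with heq | hlt2
  · have hc : (univ.filter (fun j => p j ≤ q * (BHkstar q p) / m)).card ≤ m := by
      refine le_trans (card_filter_le _ _) ?_
      simp
    omega
  · have hP : BHkstar q p + 1 ≤
        (univ.filter (fun j => p j ≤ q * ((BHkstar q p + 1 : ℕ) : ℝ) / m)).card :=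
      le_trans hlt (count_mono q hq p (Nat.le_succ _))
    have := Nat.le_findGreatest (P := fun k => k ≤ (univ.filter (fun j => p j ≤ q * k / m)).card)
      hlt2 hP
    have : BHkstar q p + 1 ≤ BHkstar q p := this
    omega

lemma BH_kstar_mono (q : ℝ) (hq : 0 ≤ q) {m : ℕ} {p p' : Fin m → ℝ} (h : ∀ i, p' i ≤ p i) :
    BHkstar q p ≤ BHkstar q p' := by
  apply Nat.le_findGreatest (kstar_le q p)
  refine le_trans (kstar_le_count q p) ?_
  apply card_le_card
  intro i hi
  simp only [mem_filter, mem_univ, true_and] at *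
  exact (h i).trans hi

/-- Self-consistency of BH membership via the leave-one-out set: `j` is rejected by BH on
`(p_1,…,p_m)` if and only if `p_j ≤ q|R̂_{j→0}|/m`, where `R̂_{j→0}` is the BH rejection set with
`p_j` replaced by `0` (which always contains `j`). -/
theorem stmt10 (q : ℝ) (hq0 : 0 < q) (hq1 : q < 1) (m : ℕ) (p : Fin m → ℝ)
    (hp : ∀ j, 0 ≤ p j ∧ p j ≤ 1) (j : Fin m) :
    j ∈ BHset q (Function.update p j 0) ∧
      (j ∈ BHset q p ↔ p j ≤ q * ((BHset q (Function.update p j 0)).card : ℝ) / m) := by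
  set p' := Function.update p j 0 with hp'
  have hupd : ∀ i, p' i ≤ p i := by
    intro i
    by_cases hi : i = j
    · subst hi; simp [hp', (hp i).1]
    · simp [hp', Function.update_of_ne hi]
  have hcard' : (BHset q p').card = BHkstar q p' := count_eq_kstar q hq0.le p'
  have hnn : (0 : ℝ) ≤ q * (BHkstar q p') / m := by positivity
  have hmem : j ∈ BHset q p' := by
    refine mem_filter.mpr ⟨mem_univ j, ?_⟩
    simpa [hp'] using hnn
  refine ⟨hmem, ?_⟩
  have hcardR : ((BHset q p').card : ℝ) = (BHkstar q p' : ℝ) := by rw [hcard']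
  rw [hcardR]
  constructor
  · intro hj
    have hj' : p j ≤ q * (BHkstar q p) / m := (mem_filter.mp hj).2
    exact hj'.trans (thresh_mono q hq0.le m (BH_kstar_mono q hq0.le hupd))
  · intro hle
    have hsets : univ.filter (fun i => p i ≤ q * (BHkstar q p') / m)
        = univ.filter (fun i => p' i ≤ q * (BHkstar q p') / m) := by
      apply filter_congr
      intro i _
      by_cases hi : i = j
      · subst hi; rw [hp'] at hle hnn; simp [hp', hle, hnn]
      · simp [hp', Function.update_of_ne hi]
    have hP : BHkstar q p' ≤ (univ.filter (fun i => p i ≤ q * ((BHkstar q p' : ℕ) : ℝ) / m)).card := by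
      rw [hsets]; exact kstar_le_count q p'
    have hk : BHkstar q p' ≤ BHkstar q p :=
      Nat.le_findGreatest (P := fun k => k ≤ (univ.filter (fun i => p i ≤ q * k / m)).card)
        (kstar_le q p') hP
    exact mem_filter.mpr ⟨mem_univ j, hle.trans (thresh_mono q hq0.le m hk)⟩
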